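/- The function h(t) = -log(t/tan t)/t² = (log(tan t) - log t)/t² is strictly increasing on (0, π/2). -/

import Mathlib

open Real Set

private lemma nonneg_of_deriv_aux (f f' : ℝ → ℝ) (hd : ∀ x, HasDerivAt f (f' x) x)
    (h0 : f 0 = 0) (h' : ∀ x, 0 ≤ x → 0 ≤ f' x) {x : ℝ} (hx : 0 ≤ x) : 0 ≤ f x := by
  have hm : MonotoneOn f (Set.Ici (0:ℝ)) := by
    apply monotoneOn_of_deriv_nonneg (convex_Ici 0)
      (fun y _ => (hd y).continuousAt.continuousWithinAt)
      (fun y _ => (hd y).differentiableAt.differentiableWithinAt)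
    intro y hy
    rw [(hd y).deriv]
    exact h' y (by simpa [interior_Ici] using hy : (0:ℝ) < y).le
  simpa [h0] using hm Set.self_mem_Ici hx hx

private lemma taylor_sin1 {x : ℝ} (hx : 0 ≤ x) : x - x^3/6 ≤ Real.sin x := by
  have h := nonneg_of_deriv_aux (fun x => Real.sin x - (x - x^3/6))
      (fun x => Real.cos x - (1 - x^2/2)) (fun y => ?_) (by norm_num) (fun y _ => ?_) hx
  · simpa [sub_nonneg] using h
  · have h2 : HasDerivAt (fun x : ℝ => x - x^3/6) (1 - y^2/2) y := by
      have := (hasDerivAt_id y).sub ((hasDerivAt_pow 3 y).div_const 6)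
      exact this.congr_deriv (by push_cast; ring)
    exact (Real.hasDerivAt_sin y).sub h2
  · have := Real.one_sub_sq_div_two_le_cos (x := y); linarith

private lemma taylor_cos2 {x : ℝ} (hx : 0 ≤ x) : Real.cos x ≤ 1 - x^2/2 + x^4/24 := by
  have h := nonneg_of_deriv_aux (fun x => (1 - x^2/2 + x^4/24) - Real.cos x)
      (fun x => (-x + x^3/6) + Real.sin x) (fun y => ?_) (by norm_num) (fun y hy => ?_) hx
  · simpa [sub_nonneg] using h
  · have h2 : HasDerivAt (fun x : ℝ => 1 - x^2/2 + x^4/24) (-y + y^3/6) y := by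
      have := ((hasDerivAt_const y (1:ℝ)).sub ((hasDerivAt_pow 2 y).div_const 2)).add
        ((hasDerivAt_pow 4 y).div_const 24)
      exact this.congr_deriv (by push_cast; ring)
    have h3 := h2.sub (Real.hasDerivAt_cos y)
    exact h3.congr_deriv (by ring)
  · have := taylor_sin1 hy; linarith

private lemma taylor_sin3 {x : ℝ} (hx : 0 ≤ x) : Real.sin x ≤ x - x^3/6 + x^5/120 := by
  have h := nonneg_of_deriv_aux (fun x => (x - x^3/6 + x^5/120) - Real.sin x)
      (fun x => (1 - x^2/2 + x^4/24) - Real.cos x) (fun y => ?_) (by norm_num)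
      (fun y hy => ?_) hx
  · simpa [sub_nonneg] using h
  · have h2 : HasDerivAt (fun x : ℝ => x - x^3/6 + x^5/120) (1 - y^2/2 + y^4/24) y := by
      have := ((hasDerivAt_id y).sub ((hasDerivAt_pow 3 y).div_const 6)).add
        ((hasDerivAt_pow 5 y).div_const 120)
      exact this.congr_deriv (by push_cast; ring)
    exact h2.sub (Real.hasDerivAt_sin y)
  · have := taylor_cos2 hy; linarith

private lemma taylor_cos4 {x : ℝ} (hx : 0 ≤ x) :
    1 - x^2/2 + x^4/24 - x^6/720 ≤ Real.cos x := by
  have h := nonneg_of_deriv_aux (fun x => Real.cos x - (1 - x^2/2 + x^4/24 - x^6/720))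
      (fun x => (x - x^3/6 + x^5/120) - Real.sin x) (fun y => ?_) (by norm_num)
      (fun y hy => ?_) hx
  · simpa [sub_nonneg] using h
  · have h2 : HasDerivAt (fun x : ℝ => 1 - x^2/2 + x^4/24 - x^6/720)
        (-y + y^3/6 - y^5/120) y := by
      have := (((hasDerivAt_const y (1:ℝ)).sub ((hasDerivAt_pow 2 y).div_const 2)).add
        ((hasDerivAt_pow 4 y).div_const 24)).sub ((hasDerivAt_pow 6 y).div_const 720)
      exact this.congr_deriv (by push_cast; ring)
    have := (Real.hasDerivAt_cos y).sub h2
    exact this.congr_deriv (by ring)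
  · have := taylor_sin3 hy; linarith

private lemma taylor_sin5 {x : ℝ} (hx : 0 ≤ x) :
    x - x^3/6 + x^5/120 - x^7/5040 ≤ Real.sin x := by
  have h := nonneg_of_deriv_aux
      (fun x => Real.sin x - (x - x^3/6 + x^5/120 - x^7/5040))
      (fun x => Real.cos x - (1 - x^2/2 + x^4/24 - x^6/720)) (fun y => ?_) (by norm_num)
      (fun y hy => ?_) hx
  · simpa [sub_nonneg] using h
  · have h2 : HasDerivAt (fun x : ℝ => x - x^3/6 + x^5/120 - x^7/5040)
        (1 - y^2/2 + y^4/24 - y^6/720) y := by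
      have := (((hasDerivAt_id y).sub ((hasDerivAt_pow 3 y).div_const 6)).add
        ((hasDerivAt_pow 5 y).div_const 120)).sub ((hasDerivAt_pow 7 y).div_const 5040)
      exact this.congr_deriv (by push_cast; ring)
    exact (Real.hasDerivAt_sin y).sub h2
  · have := taylor_cos4 hy; linarith

private lemma R_nonneg {s : ℝ} (h0 : 0 ≤ s) (h14 : s^2 ≤ 14) :
    0 ≤ s^2 + s * Real.sin s + 4 * Real.cos s - 4 := by
  have h1 := taylor_sin5 h0
  have h2 := taylor_cos4 h0
  nlinarith [mul_le_mul_of_nonneg_left h1 h0, pow_nonneg h0 6, pow_nonneg h0 2]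

private lemma key_deriv (x : ℝ) (hx : x ∈ Set.Ioo (0:ℝ) (Real.pi/2)) :
    ∃ d : ℝ, HasDerivAt (fun t : ℝ => -Real.log (t / Real.tan t) / t^2) d x ∧ 0 < d := by
  obtain ⟨hx0, hx2⟩ := hx
  have hπ := Real.pi_pos
  have hc : 0 < Real.cos x := Real.cos_pos_of_mem_Ioo ⟨by linarith, hx2⟩
  have hs : 0 < Real.sin x := Real.sin_pos_of_pos_of_lt_pi hx0 (by linarith)
  have ht : 0 < Real.tan x := by rw [Real.tan_eq_sin_div_cos]; positivity
  have hxt : x < Real.tan x := Real.lt_tan hx0 hx2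
  have hu : 0 < x / Real.tan x := div_pos hx0 ht
  -- the inequality part
  have hlog2 : Real.log (Real.tan x / x) < Real.tan x / x - 1 :=
    Real.log_lt_sub_one_of_pos (div_pos ht hx0) ((one_lt_div hx0).2 hxt).ne'
  have hs2 : Real.sin x ^ 2 + Real.cos x ^ 2 = 1 := Real.sin_sq_add_cos_sq x
  have hR := R_nonneg (s := 2*x) (by linarith) (by nlinarith [Real.pi_lt_d2])
  have hP : 0 ≤ x^2 + x * (Real.sin x * Real.cos x) - 2 * Real.sin x ^ 2 := by
    rw [Real.sin_two_mul, Real.cos_two_mul] at hR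
    nlinarith [hR, hs2]
  have hg : 0 < x / (Real.sin x * Real.cos x) - 1
      - 2 * (Real.log (Real.tan x) - Real.log x) := by
    have hld : Real.log (Real.tan x) - Real.log x = Real.log (Real.tan x / x) :=
      (Real.log_div ht.ne' hx0.ne').symm
    have h2 : x / (Real.sin x * Real.cos x) + 1 - 2 * (Real.tan x / x)
        = (x^2 + x * (Real.sin x * Real.cos x) - 2 * Real.sin x ^ 2)
          / (x * (Real.sin x * Real.cos x)) := by
      rw [Real.tan_eq_sin_div_cos]
      field_simp
    have h3 : 0 ≤ x / (Real.sin x * Real.cos x) + 1 - 2 * (Real.tan x / x) := by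
      rw [h2]; exact div_nonneg hP (by positivity)
    rw [hld]
    linarith
  -- the derivative part
  have hdiv : HasDerivAt (fun t : ℝ => t / Real.tan t)
      ((1 * Real.tan x - x * (1 / Real.cos x ^ 2)) / Real.tan x ^ 2) x :=
    (hasDerivAt_id' x).div (Real.hasDerivAt_tan hc.ne') ht.ne'
  have hlog : HasDerivAt (fun t : ℝ => Real.log (t / Real.tan t))
      ((x / Real.tan x)⁻¹ * ((1 * Real.tan x - x * (1 / Real.cos x ^ 2)) / Real.tan x ^ 2)) x :=
    by exact (Real.hasDerivAt_log hu.ne').comp x hdiv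
  have hpow : HasDerivAt (fun t : ℝ => t^2) (2*x) x := by
    simpa using hasDerivAt_pow 2 x
  have hD := hlog.neg.div hpow (by positivity)
  refine ⟨(x / (Real.sin x * Real.cos x) - 1
      - 2 * (Real.log (Real.tan x) - Real.log x)) / x^3, ?_, ?_⟩
  · refine hD.congr_deriv ?_
    simp only [Pi.neg_apply]
    rw [Real.log_div hx0.ne' ht.ne', Real.tan_eq_sin_div_cos]
    field_simp
    ring
  · exact div_pos hg (by positivity)

theorem stmt_18 :
    StrictMonoOn (fun t : ℝ => -Real.log (t / Real.tan t) / t^2) (Set.Ioo 0 (Real.pi/2)) := by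
  apply strictMonoOn_of_deriv_pos (convex_Ioo _ _)
  · intro y hy
    obtain ⟨d, hd, _⟩ := key_deriv y hy
    exact hd.continuousAt.continuousWithinAt
  · intro y hy
    rw [isOpen_Ioo.interior_eq] at hy
    obtain ⟨d, hd, hdp⟩ := key_deriv y hy
    rw [hd.deriv]
    exact hdp
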